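/- For a nonzero point x₀ in a finite-dimensional real normed space X, x₀ has a unique support functional if and only if the norm function x ↦ ‖x‖ is (Fréchet) differentiable at x₀. -/

import Mathlib

open Set

section aux
variable {X : Type*} [NormedAddCommGroup X] [NormedSpace ℝ X]

/-- difference quotient of the norm at `x₀` in direction `y`. -/
noncomputable def nsl (x₀ y : X) (t : ℝ) : ℝ := (‖x₀ + t • y‖ - ‖x₀‖) / t

lemma nsl_mono (x₀ y : X) {s t : ℝ} (hs : 0 < s) (hst : s ≤ t) :
    nsl x₀ y s ≤ nsl x₀ y t := by
  have ht : 0 < t := hs.trans_le hst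
  have hd : s / t ≤ 1 := (div_le_one ht).2 hst
  have hd0 : 0 ≤ s / t := by positivity
  have h1 : x₀ + s • y = (1 - s/t) • x₀ + (s/t) • (x₀ + t • y) := by
    rw [smul_add, smul_smul, div_mul_cancel₀ _ ht.ne']
    module
  have key : ‖x₀ + s • y‖ ≤ (1 - s/t) * ‖x₀‖ + (s/t) * ‖x₀ + t • y‖ := by
    rw [h1]
    calc ‖(1 - s/t) • x₀ + (s/t) • (x₀ + t • y)‖
        ≤ ‖(1 - s/t) • x₀‖ + ‖(s/t) • (x₀ + t • y)‖ := norm_add_le _ _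
      _ = (1 - s/t) * ‖x₀‖ + (s/t) * ‖x₀ + t • y‖ := by
          rw [norm_smul, norm_smul, Real.norm_eq_abs, Real.norm_eq_abs,
            abs_of_nonneg (by linarith), abs_of_nonneg hd0]
  rw [nsl, nsl, div_le_div_iff₀ hs ht]
  have e : s / t * t = s := div_mul_cancel₀ _ ht.ne'
  nlinarith [key, ht, hs, norm_nonneg (x₀ + t • y), norm_nonneg x₀]

lemma neg_norm_le_nsl (x₀ y : X) {t : ℝ} (ht : 0 < t) : -‖y‖ ≤ nsl x₀ y t := by
  rw [nsl, le_div_iff₀ ht]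
  have h := norm_sub_norm_le x₀ (x₀ + t • y)
  have h2 : ‖x₀ - (x₀ + t • y)‖ = t * ‖y‖ := by
    rw [show x₀ - (x₀ + t • y) = -(t • y) by abel, norm_neg, norm_smul,
      Real.norm_eq_abs, abs_of_pos ht]
  nlinarith

lemma nsl_le_norm (x₀ y : X) {t : ℝ} (ht : 0 < t) : nsl x₀ y t ≤ ‖y‖ := by
  rw [nsl, div_le_iff₀ ht]
  have h := norm_add_le x₀ (t • y)
  have h2 : ‖t • y‖ = t * ‖y‖ := by
    rw [norm_smul, Real.norm_eq_abs, abs_of_pos ht]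
  nlinarith

/-- one-sided directional derivative of the norm (as an inf). -/
noncomputable def ndd (x₀ y : X) : ℝ := sInf (nsl x₀ y '' Ioi 0)

lemma ndd_bddBelow (x₀ y : X) : BddBelow (nsl x₀ y '' Ioi 0) :=
  ⟨-‖y‖, by rintro z ⟨t, ht, rfl⟩; exact neg_norm_le_nsl x₀ y ht⟩

lemma ndd_nonempty (x₀ y : X) : (nsl x₀ y '' Ioi 0).Nonempty :=
  ⟨nsl x₀ y 1, 1, Set.mem_Ioi.2 one_pos, rfl⟩

lemma ndd_le_nsl (x₀ y : X) {t : ℝ} (ht : 0 < t) : ndd x₀ y ≤ nsl x₀ y t :=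
  csInf_le (ndd_bddBelow x₀ y) ⟨t, ht, rfl⟩

lemma le_ndd (x₀ y : X) {c : ℝ} (h : ∀ t, 0 < t → c ≤ nsl x₀ y t) : c ≤ ndd x₀ y :=
  le_csInf (ndd_nonempty x₀ y) (by rintro z ⟨t, ht, rfl⟩; exact h t ht)

lemma ndd_le_norm (x₀ y : X) : ndd x₀ y ≤ ‖y‖ :=
  (ndd_le_nsl x₀ y one_pos).trans (nsl_le_norm x₀ y one_pos)

lemma nsl_smul (x₀ y : X) {c t : ℝ} (hc : 0 < c) (ht : 0 < t) :
    nsl x₀ (c • y) t = c * nsl x₀ y (c * t) := by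
  rw [nsl, nsl, smul_smul, mul_comm t c]
  field_simp

lemma smul_ndd_le (x₀ y : X) {c : ℝ} (hc : 0 < c) : c * ndd x₀ y ≤ ndd x₀ (c • y) := by
  apply le_ndd
  intro t ht
  rw [nsl_smul x₀ y hc ht]
  exact mul_le_mul_of_nonneg_left (ndd_le_nsl x₀ y (by positivity)) hc.le

lemma ndd_smul (x₀ y : X) {c : ℝ} (hc : 0 < c) : ndd x₀ (c • y) = c * ndd x₀ y := by
  refine le_antisymm ?_ (smul_ndd_le x₀ y hc)
  have h2 := smul_ndd_le x₀ (c • y) (c := c⁻¹) (by positivity)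
  rw [smul_smul, inv_mul_cancel₀ hc.ne', one_smul] at h2
  calc ndd x₀ (c • y) = c * (c⁻¹ * ndd x₀ (c • y)) := by field_simp
    _ ≤ c * ndd x₀ y := mul_le_mul_of_nonneg_left h2 hc.le

lemma nsl_add_le (x₀ y z : X) {t : ℝ} (ht : 0 < t) :
    nsl x₀ (y + z) t ≤ nsl x₀ y (2 * t) + nsl x₀ z (2 * t) := by
  have h1 : x₀ + t • (y + z) =
      (2⁻¹ : ℝ) • (x₀ + (2 * t) • y) + (2⁻¹ : ℝ) • (x₀ + (2 * t) • z) := by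
    module
  have key : ‖x₀ + t • (y + z)‖ ≤
      2⁻¹ * ‖x₀ + (2 * t) • y‖ + 2⁻¹ * ‖x₀ + (2 * t) • z‖ := by
    rw [h1]
    refine (norm_add_le _ _).trans ?_
    rw [norm_smul, norm_smul]
    norm_num
  rw [nsl, nsl, nsl, ← add_div, div_le_div_iff₀ ht (by positivity)]
  nlinarith [key]

lemma ndd_add (x₀ y z : X) : ndd x₀ (y + z) ≤ ndd x₀ y + ndd x₀ z := by
  refine le_of_forall_pos_le_add fun ε hε => ?_
  obtain ⟨a, ⟨t₁, ht₁, rfl⟩, ha⟩ :=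
    exists_lt_of_csInf_lt (ndd_nonempty x₀ y) (show ndd x₀ y < ndd x₀ y + ε / 2 by linarith)
  obtain ⟨b, ⟨t₂, ht₂, rfl⟩, hb⟩ :=
    exists_lt_of_csInf_lt (ndd_nonempty x₀ z) (show ndd x₀ z < ndd x₀ z + ε / 2 by linarith)
  rw [Set.mem_Ioi] at ht₁ ht₂
  set t := min t₁ t₂ / 2 with htdef
  have ht : 0 < t := by positivity
  have h2t₁ : 2 * t ≤ t₁ := by
    have := min_le_left t₁ t₂; rw [htdef]; linarith
  have h2t₂ : 2 * t ≤ t₂ := by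
    have := min_le_right t₁ t₂; rw [htdef]; linarith
  calc ndd x₀ (y + z) ≤ nsl x₀ (y + z) t := ndd_le_nsl x₀ _ ht
    _ ≤ nsl x₀ y (2 * t) + nsl x₀ z (2 * t) := nsl_add_le x₀ y z ht
    _ ≤ nsl x₀ y t₁ + nsl x₀ z t₂ :=
        add_le_add (nsl_mono x₀ y (by positivity) h2t₁) (nsl_mono x₀ z (by positivity) h2t₂)
    _ ≤ ndd x₀ y + ε / 2 + (ndd x₀ z + ε / 2) := add_le_add ha.le hb.le
    _ = ndd x₀ y + ndd x₀ z + ε := by ring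

lemma nsl_self (x₀ : X) {t : ℝ} (ht : 0 < t) : nsl x₀ x₀ t = ‖x₀‖ := by
  rw [nsl, show x₀ + t • x₀ = (1 + t) • x₀ by module, norm_smul, Real.norm_eq_abs,
    abs_of_pos (by linarith)]
  field_simp
  ring

lemma ndd_self (x₀ : X) : ndd x₀ x₀ = ‖x₀‖ := by
  refine le_antisymm ((ndd_le_nsl x₀ x₀ one_pos).trans_eq (nsl_self x₀ one_pos)) ?_
  exact le_ndd x₀ x₀ fun t ht => (nsl_self x₀ ht).ge

lemma ndd_neg_self (x₀ : X) : ndd x₀ (-x₀) = -‖x₀‖ := by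
  refine le_antisymm ?_ ?_
  · refine (ndd_le_nsl x₀ (-x₀) one_pos).trans ?_
    rw [nsl]
    simp
  · exact le_ndd x₀ (-x₀) fun t ht => by
      simpa using neg_norm_le_nsl x₀ (-x₀) ht

lemma ndd_zero (x₀ : X) : ndd x₀ (0 : X) = 0 := by
  have h : ∀ t : ℝ, 0 < t → nsl x₀ (0 : X) t = 0 := by
    intro t ht; rw [nsl]; simp
  refine le_antisymm ((ndd_le_nsl x₀ 0 one_pos).trans_eq (h 1 one_pos)) ?_
  exact le_ndd x₀ 0 fun t ht => (h t ht).ge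

/-- Any support functional is dominated by `‖x₀‖ * ndd`. -/
lemma support_le_ndd (x₀ : X) (hx₀ : x₀ ≠ 0) (f : X →L[ℝ] ℝ) (hf1 : ‖f‖ = ‖x₀‖)
    (hf2 : f x₀ = ‖x₀‖ ^ 2) (y : X) : f y ≤ ‖x₀‖ * ndd x₀ y := by
  have hn : (0:ℝ) < ‖x₀‖ := norm_pos_iff.2 hx₀
  rw [← div_le_iff₀' hn]
  apply le_ndd
  intro t ht
  have h1 : f (x₀ + t • y) ≤ ‖x₀‖ * ‖x₀ + t • y‖ := by
    calc f (x₀ + t • y) ≤ ‖f (x₀ + t • y)‖ := le_abs_self _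
      _ ≤ ‖f‖ * ‖x₀ + t • y‖ := f.le_opNorm _
      _ = ‖x₀‖ * ‖x₀ + t • y‖ := by rw [hf1]
  have h2 : f (x₀ + t • y) = ‖x₀‖ ^ 2 + t * f y := by
    rw [map_add, map_smul, hf2]; rfl
  rw [nsl, div_le_div_iff₀ hn (by positivity)]
  nlinarith

section findim
variable [FiniteDimensional ℝ X]

set_option maxHeartbeats 2000000 in
/-- If the support functional at `x₀ ≠ 0` is unique, then `ndd` is given by it. -/
lemma ndd_eq_of_unique (x₀ : X) (hx₀ : x₀ ≠ 0) (f : X →L[ℝ] ℝ) (hf1 : ‖f‖ = ‖x₀‖)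
    (hf2 : f x₀ = ‖x₀‖ ^ 2)
    (huniq : ∀ g : X →L[ℝ] ℝ, ‖g‖ = ‖x₀‖ ∧ g x₀ = ‖x₀‖ ^ 2 → g = f) (y₀ : X) :
    ndd x₀ y₀ = ‖x₀‖⁻¹ * f y₀ := by
  have hn : (0:ℝ) < ‖x₀‖ := norm_pos_iff.2 hx₀
  rcases eq_or_ne y₀ 0 with rfl | hy₀
  · simp [ndd_zero]
  -- Hahn-Banach extension of `c • y₀ ↦ c * ndd x₀ y₀` dominated by `ndd x₀`
  have hdom : ∀ x : (LinearPMap.mkSpanSingleton y₀ (ndd x₀ y₀) hy₀ : X →ₗ.[ℝ] ℝ).domain,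
      (LinearPMap.mkSpanSingleton y₀ (ndd x₀ y₀) hy₀ : X →ₗ.[ℝ] ℝ) x ≤ ndd x₀ x := by
    rintro ⟨x, hx⟩
    obtain ⟨c, rfl⟩ := Submodule.mem_span_singleton.1 hx
    rw [LinearPMap.mkSpanSingleton'_apply]
    rcases lt_trichotomy c 0 with hc | rfl | hc
    · have h1 : (0:ℝ) ≤ ndd x₀ (c • y₀) + ndd x₀ (-(c • y₀)) := by
        have := ndd_add x₀ (c • y₀) (-(c • y₀))
        simpa [ndd_zero] using this
      have h2 : ndd x₀ (-(c • y₀)) = -c * ndd x₀ y₀ := by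
        rw [show -(c • y₀) = (-c) • y₀ by module]
        exact ndd_smul x₀ y₀ (by linarith)
      simp only [smul_eq_mul, RingHom.id_apply]
      nlinarith
    · simp [ndd_zero]
    · rw [ndd_smul x₀ y₀ hc]; rfl
  obtain ⟨g, hg1, hg2⟩ := exists_extension_of_le_sublinear
      (LinearPMap.mkSpanSingleton y₀ (ndd x₀ y₀) hy₀) (ndd x₀)
      (fun c hc x => ndd_smul x₀ x hc)
      (fun y z => ndd_add x₀ y z) hdom
  -- the extension has norm ≤ 1 hence gives a support functional
  have hgle : ∀ y : X, g y ≤ ‖y‖ := fun y => (hg2 y).trans (ndd_le_norm x₀ y)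
  have hgabs : ∀ y : X, ‖g y‖ ≤ 1 * ‖y‖ := by
    intro y
    rw [one_mul, Real.norm_eq_abs, abs_le]
    refine ⟨?_, hgle y⟩
    have := hgle (-y)
    simp only [map_neg] at this
    rw [norm_neg] at this
    linarith
  set G : X →L[ℝ] ℝ := LinearMap.mkContinuous g 1 hgabs with hGdef
  have hGapp : ∀ y : X, G y = g y := fun y => rfl
  have hGnorm : ‖G‖ ≤ 1 := LinearMap.mkContinuous_norm_le g zero_le_one hgabs
  have hGy₀ : G y₀ = ndd x₀ y₀ := by
    rw [hGapp]
    have := hg1 ⟨y₀, Submodule.mem_span_singleton_self y₀⟩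
    rw [LinearPMap.mkSpanSingleton_apply] at this
    exact this
  have hGx₀ : G x₀ = ‖x₀‖ := by
    have h1 : g x₀ ≤ ‖x₀‖ := (hg2 x₀).trans (ndd_self x₀).le
    have h2 : g (-x₀) ≤ -‖x₀‖ := (hg2 (-x₀)).trans (ndd_neg_self x₀).le
    rw [map_neg] at h2
    rw [hGapp]
    linarith
  set F : X →L[ℝ] ℝ := ‖x₀‖ • G with hFdef
  have hFx₀ : F x₀ = ‖x₀‖ ^ 2 := by
    rw [hFdef]
    simp [hGx₀]
    ring
  have hFnorm : ‖F‖ = ‖x₀‖ := by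
    refine le_antisymm ?_ ?_
    · calc ‖F‖ ≤ ‖(‖x₀‖)‖ * ‖G‖ := ContinuousLinearMap.opNorm_smul_le _ _
        _ ≤ ‖x₀‖ * 1 := by
            rw [Real.norm_eq_abs, abs_of_pos hn]
            exact mul_le_mul_of_nonneg_left hGnorm hn.le
        _ = ‖x₀‖ := mul_one _
    · have := F.le_opNorm x₀
      rw [hFx₀] at this
      rw [Real.norm_eq_abs, abs_of_pos (by positivity)] at this
      nlinarith
  have hFf : F = f := huniq F ⟨hFnorm, hFx₀⟩
  have : f y₀ = ‖x₀‖ * ndd x₀ y₀ := by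
    rw [← hFf, hFdef]
    simp [hGy₀]
  rw [this]
  field_simp

lemma nsl_lip (x₀ y y' : X) {t : ℝ} (ht : 0 < t) :
    nsl x₀ y t ≤ nsl x₀ y' t + ‖y - y'‖ := by
  have h : ‖x₀ + t • y‖ ≤ ‖x₀ + t • y'‖ + t * ‖y - y'‖ := by
    calc ‖x₀ + t • y‖ = ‖(x₀ + t • y') + t • (y - y')‖ := by
          congr 1; module
      _ ≤ ‖x₀ + t • y'‖ + ‖t • (y - y')‖ := norm_add_le _ _
      _ = ‖x₀ + t • y'‖ + t * ‖y - y'‖ := by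
          rw [norm_smul, Real.norm_eq_abs, abs_of_pos ht]
  rw [nsl, nsl, div_add' _ _ _ ht.ne', div_le_div_iff₀ ht ht]
  nlinarith

/-- If the one-sided directional derivative of the norm is a (bounded) linear functional, the
norm is Fréchet differentiable. -/
lemma hasFDerivAt_norm_of_ndd (x₀ : X) (hx₀ : x₀ ≠ 0) (g : X →L[ℝ] ℝ) (hg : ‖g‖ ≤ 1)
    (hndd : ∀ y, ndd x₀ y = g y) : HasFDerivAt (fun x : X => ‖x‖) g x₀ := by
  have key : ∀ ε : ℝ, 0 < ε → ∃ δ > 0, ∀ t, 0 < t → t ≤ δ →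
      ∀ y : X, ‖y‖ = 1 → nsl x₀ y t - g y ≤ ε := by
    intro ε hε
    have hchoice : ∀ y : X, ∃ t, 0 < t ∧ nsl x₀ y t < g y + ε / 2 := by
      intro y
      have h1 : ndd x₀ y < g y + ε / 2 := by rw [hndd y]; linarith
      obtain ⟨a, ⟨t, ht, rfl⟩, ha⟩ := exists_lt_of_csInf_lt (ndd_nonempty x₀ y) h1
      exact ⟨t, Set.mem_Ioi.1 ht, ha⟩
    choose T hT1 hT2 using hchoice
    have hcomp : IsCompact (Metric.sphere (0 : X) 1) := isCompact_sphere 0 1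
    obtain ⟨s, hs1, hs2⟩ := hcomp.elim_nhds_subcover (fun y => Metric.ball y (ε / 4))
      (fun y _ => Metric.ball_mem_nhds y (by positivity))
    have hsph : (‖x₀‖⁻¹ • x₀) ∈ Metric.sphere (0 : X) 1 := by
      simp [norm_smul, abs_of_pos (inv_pos.2 (norm_pos_iff.2 hx₀)),
        inv_mul_cancel₀ (norm_pos_iff.2 hx₀).ne']
    have hne : s.Nonempty := by
      rcases Set.mem_iUnion₂.1 (hs2 hsph) with ⟨i, hi, -⟩
      exact ⟨i, hi⟩
    refine ⟨s.inf' hne T, ?_, ?_⟩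
    · exact (Finset.lt_inf'_iff hne).2 fun b _ => hT1 b
    intro t ht htδ y hy
    obtain ⟨i, hi, hyi⟩ := Set.mem_iUnion₂.1 (hs2 (by simpa using hy))
    have hdist : ‖y - i‖ < ε / 4 := by
      rw [← dist_eq_norm]; exact hyi
    have hTi : t ≤ T i := htδ.trans (Finset.inf'_le T hi)
    have hgyi : g y ≥ g i - ‖y - i‖ := by
      have h := g.le_opNorm (i - y)
      have habs : |g i - g y| ≤ ‖g‖ * ‖i - y‖ := by
        rw [← map_sub, ← Real.norm_eq_abs]; exact h
      rw [abs_le] at habs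
      have h2 : ‖g‖ * ‖i - y‖ ≤ ‖i - y‖ := by
        nlinarith [norm_nonneg (i - y)]
      rw [show ‖y - i‖ = ‖i - y‖ from norm_sub_rev y i]
      linarith [habs.1]
    calc nsl x₀ y t - g y ≤ nsl x₀ y (T i) - g y := by
          linarith [nsl_mono x₀ y ht hTi]
      _ ≤ nsl x₀ i (T i) + ‖y - i‖ - g y := by linarith [nsl_lip x₀ y i (hT1 i)]
      _ ≤ nsl x₀ i (T i) + ‖y - i‖ - (g i - ‖y - i‖) := by linarith
      _ ≤ (g i + ε / 2) + ‖y - i‖ - (g i - ‖y - i‖) := by linarith [hT2 i]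
      _ ≤ ε := by linarith
  rw [hasFDerivAt_iff_isLittleO_nhds_zero]
  rw [Asymptotics.isLittleO_iff]
  intro c hc
  obtain ⟨δ, hδ, hδ2⟩ := key c hc
  rw [Metric.eventually_nhds_iff]
  refine ⟨δ, hδ, fun {h} hhδ => ?_⟩
  rcases eq_or_ne h 0 with rfl | hh
  · simp
  have hhn : 0 < ‖h‖ := norm_pos_iff.2 hh
  set y : X := ‖h‖⁻¹ • h with hy
  have hy1 : ‖y‖ = 1 := by
    rw [hy, norm_smul, Real.norm_eq_abs, abs_of_pos (inv_pos.2 hhn), inv_mul_cancel₀ hhn.ne']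
  have hsmul : ‖h‖ • y = h := by
    rw [hy, smul_smul, mul_inv_cancel₀ hhn.ne', one_smul]
  have hdd : dist h 0 < δ := hhδ
  have hhδ' : ‖h‖ ≤ δ := by
    rw [dist_zero_right] at hdd; linarith
  have h1 : nsl x₀ y ‖h‖ - g y ≤ c := hδ2 ‖h‖ hhn hhδ' y hy1
  have h0 : 0 ≤ nsl x₀ y ‖h‖ - g y := by
    have := ndd_le_nsl x₀ y hhn
    rw [hndd y] at this; linarith
  have heq : ‖x₀ + h‖ - ‖x₀‖ - g h = ‖h‖ * (nsl x₀ y ‖h‖ - g y) := by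
    rw [nsl, hsmul]
    have : g h = ‖h‖ * g y := by
      rw [← hsmul, map_smul]; simp [hsmul]
    rw [this]
    field_simp
  rw [Real.norm_eq_abs, heq, abs_of_nonneg (by positivity)]
  calc ‖h‖ * (nsl x₀ y ‖h‖ - g y) ≤ ‖h‖ * c := by
        exact mul_le_mul_of_nonneg_left h1 hhn.le
    _ = c * ‖h‖ := mul_comm _ _

end findim

end aux

/-- A nonzero point of a finite-dimensional real normed space has a unique support
functional iff the norm is Fréchet differentiable there. -/
theorem stmt_1 (X : Type*) [NormedAddCommGroup X] [NormedSpace ℝ X]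
    [FiniteDimensional ℝ X] (x₀ : X) (hx₀ : x₀ ≠ 0) :
    (∃! f : X →L[ℝ] ℝ, ‖f‖ = ‖x₀‖ ∧ f x₀ = ‖x₀‖ ^ 2) ↔
      DifferentiableAt ℝ (fun x : X => ‖x‖) x₀ := by
  have hn : (0:ℝ) < ‖x₀‖ := norm_pos_iff.2 hx₀
  constructor
  · rintro ⟨f, ⟨hf1, hf2⟩, huniq⟩
    have hndd := ndd_eq_of_unique x₀ hx₀ f hf1 hf2 (fun g hg => huniq g hg)
    set g : X →L[ℝ] ℝ := ‖x₀‖⁻¹ • f with hgdef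
    have hg : ‖g‖ ≤ 1 := by
      rw [hgdef]
      refine (ContinuousLinearMap.opNorm_smul_le _ _).trans ?_
      rw [hf1, Real.norm_eq_abs, abs_of_pos (by positivity), inv_mul_cancel₀ hn.ne']
    have hgy : ∀ y, ndd x₀ y = g y := by
      intro y
      rw [hndd y, hgdef]
      simp
    exact (hasFDerivAt_norm_of_ndd x₀ hx₀ g hg hgy).differentiableAt
  · intro hd
    set f' : X →L[ℝ] ℝ := fderiv ℝ (fun x : X => ‖x‖) x₀ with hf'def
    have hkey : ∀ f : X →L[ℝ] ℝ, ‖f‖ = ‖x₀‖ ∧ f x₀ = ‖x₀‖ ^ 2 → f = ‖x₀‖ • f' := by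
      rintro f ⟨hf1, hf2⟩
      ext y
      have hc : HasDerivAt (fun t : ℝ => x₀ + t • y) y 0 := by
        simpa using ((hasDerivAt_id (0:ℝ)).smul_const y).const_add x₀
      have h0 : x₀ = (fun t : ℝ => x₀ + t • y) 0 := by simp
      have hnorm : HasDerivAt (fun t : ℝ => ‖x₀ + t • y‖) (f' y) 0 := by
        have := (h0 ▸ hd.hasFDerivAt).comp_hasDerivAt 0 hc
        rw [← h0] at this
        convert this using 1 <;> rfl
      have hlin : HasDerivAt (fun t : ℝ => ‖x₀‖⁻¹ * f (x₀ + t • y)) (‖x₀‖⁻¹ * f y) 0 := by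
        have h1 : HasDerivAt (fun t : ℝ => f (x₀ + t • y)) (f y) 0 :=
          f.hasFDerivAt.comp_hasDerivAt 0 hc
        exact h1.const_mul _
      have hψ : HasDerivAt (fun t : ℝ => ‖x₀ + t • y‖ - ‖x₀‖⁻¹ * f (x₀ + t • y))
          (f' y - ‖x₀‖⁻¹ * f y) 0 := hnorm.sub hlin
      have hmin : IsLocalMin (fun t : ℝ => ‖x₀ + t • y‖ - ‖x₀‖⁻¹ * f (x₀ + t • y)) 0 := by
        apply Filter.Eventually.of_forall
        intro t
        have h1 : f (x₀ + t • y) ≤ ‖x₀‖ * ‖x₀ + t • y‖ := by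
          calc f (x₀ + t • y) ≤ ‖f (x₀ + t • y)‖ := le_abs_self _
            _ ≤ ‖f‖ * ‖x₀ + t • y‖ := f.le_opNorm _
            _ = ‖x₀‖ * ‖x₀ + t • y‖ := by rw [hf1]
        have h2 : ‖x₀‖⁻¹ * f (x₀ + t • y) ≤ ‖x₀ + t • y‖ := by
          have h2' := mul_le_mul_of_nonneg_left h1 (inv_nonneg.2 hn.le)
          rwa [inv_mul_cancel_left₀ hn.ne'] at h2'
        have h3 : (fun t : ℝ => ‖x₀ + t • y‖ - ‖x₀‖⁻¹ * f (x₀ + t • y)) 0 = 0 := by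
          simp only [zero_smul, add_zero, hf2]
          field_simp
          ring
        rw [h3]
        simp only
        linarith
      have := hmin.hasDerivAt_eq_zero hψ
      have hfy : f y = ‖x₀‖ * f' y := by
        have h4 : f' y = ‖x₀‖⁻¹ * f y := by linarith
        rw [h4]
        field_simp
      rw [hfy]
      simp
    obtain ⟨g', hg1, hg2⟩ := exists_dual_vector ℝ x₀ (norm_ne_zero_iff.2 hx₀)
    have hg2' : g' x₀ = ‖x₀‖ := by
      rw [hg2]
      simp
    set F : X →L[ℝ] ℝ := ‖x₀‖ • g' with hFdef
    have hF : ‖F‖ = ‖x₀‖ ∧ F x₀ = ‖x₀‖ ^ 2 := by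
      constructor
      · refine le_antisymm ?_ ?_
        · refine (ContinuousLinearMap.opNorm_smul_le _ _).trans ?_
          rw [hg1, Real.norm_eq_abs, abs_of_pos hn, mul_one]
        · have hle := F.le_opNorm x₀
          have hFx : F x₀ = ‖x₀‖ ^ 2 := by rw [hFdef]; simp [hg2']; ring
          rw [hFx, Real.norm_eq_abs, abs_of_pos (by positivity)] at hle
          nlinarith
      · rw [hFdef]
        simp [hg2']
        ring
    exact ⟨F, hF, fun f hf => (hkey f hf).trans (hkey F hF).symm⟩
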